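/- arXiv:2404.02371 — 2 statements merged into one kernel-verified Lean document; each statement's English description precedes it below -/
import Mathlib

section
/- Let f be a piecewise contraction on a compact set X ⊂ ℝ^d, with maximal partition P(f), attractor Λ(f) and discontinuity set Δ(f). If Λ(f) ∩ Δ(f) = ∅, then f is Markov, i.e. its maximal partition stabilises. -/
open Set Metric Topology Function
open scoped ENNReal

noncomputable section

attribute [local instance] Classical.propDecidable

/-- Euclidean space `ℝ^d`. -/
abbrev Euc (d : ℕ) : Type := EuclideanSpace ℝ (Fin d)

/-- A piecewise contraction of a set `X ⊆ ℝ^d`, together with its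
partition of continuity `P` (intended to be the maximal partition). -/
structure PWC (d : ℕ) (X : Set (Euc d)) where
  map : Euc d → Euc d
  mapsTo : MapsTo map X X
  image_closure : closure (map '' X) ⊆ interior X
  lam : ℝ
  lam_pos : 0 < lam
  lam_lt_one : lam < 1
  m : ℕ
  m_pos : 0 < m
  P : Fin m → Set (Euc d)
  P_nonempty : ∀ i, (P i).Nonempty
  P_subset : ∀ i, P i ⊆ X
  P_open : ∀ i, IsOpen (P i)
  P_disjoint : ∀ i j, i ≠ j → Disjoint (P i) (P j)
  cover_eq : X = ⋃ i, closure (P i)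
  contracts : ∀ i, ∀ x ∈ P i, ∀ y ∈ P i, dist (map x) (map y) ≤ lam * dist x y
  Pt : Fin m → Set (Euc d)
  P_sub_Pt : ∀ i, P i ⊆ Pt i
  Pt_sub_cl : ∀ i, Pt i ⊆ closure (P i)
  Pt_disjoint : ∀ i j, i ≠ j → Disjoint (Pt i) (Pt j)
  Pt_cover : X = ⋃ i, Pt i
  contOn : ∀ i, ContinuousOn map (Pt i)

namespace PWC

variable {d : ℕ} {X : Set (Euc d)}

/-- `Δ(f)`: the union of the set of discontinuities of `f` (as a map of `X`)
with the boundary of `X`. -/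
def Delta (f : PWC d X) : Set (Euc d) :=
  {x ∈ X | ¬ ContinuousWithinAt f.map X x} ∪ frontier X

/-- The partition `P(f)` is maximal: `∂P(f) = Δ(f)`. -/
def IsMaximal (f : PWC d X) : Prop :=
  (⋃ i, frontier (f.P i)) = f.Delta

/-- The attractor `Λ(f) = ⋂ₙ closure (fⁿ(X))`. -/
def att (f : PWC d X) : Set (Euc d) :=
  ⋂ n : ℕ, closure (f.map^[n] '' X)

/-- The partition `P(fⁿ)` associated to the `n`-th iterate: its elements are
the nonempty sets `P_{i₀} ∩ f⁻¹(P_{i₁}) ∩ ⋯ ∩ f^{-(n-1)}(P_{i_{n-1}})`. -/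
def partN (f : PWC d X) (n : ℕ) : Set (Set (Euc d)) :=
  {Q | Q.Nonempty ∧ ∃ w : Fin n → Fin f.m,
    Q = ⋂ j : Fin n, f.map^[(j : ℕ)] ⁻¹' f.P (w j)}

/-- The maximal partition stabilises at time `N`. -/
def StabilisesAt (f : PWC d X) (N : ℕ) : Prop :=
  ∀ Q ∈ f.partN N, ∃ Q' ∈ f.partN N, closure (f.map^[N] '' Q) ⊆ Q'

/-- `f` is Markov: its partition stabilises at some time. -/
def Markov (f : PWC d X) : Prop :=
  ∃ N : ℕ, 0 < N ∧ f.StabilisesAt N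

/-- `N` is the stabilisation time of `f`: the least positive time at which
the partition stabilises. -/
def IsStabTime (f : PWC d X) (N : ℕ) : Prop :=
  0 < N ∧ f.StabilisesAt N ∧ ∀ k, 0 < k → k < N → ¬ f.StabilisesAt k

/-- `f` is piecewise injective: each branch extends to an injective contraction
on a neighbourhood of the closure of the corresponding partition element. -/
def PiecewiseInjective (f : PWC d X) : Prop :=
  ∀ i, ∃ U : Set (Euc d), IsOpen U ∧ closure (f.P i) ⊆ U ∧
    ∃ (ft : Euc d → Euc d) (c : ℝ), c < 1 ∧ InjOn ft U ∧
      (∀ x ∈ U, ∀ y ∈ U, dist (ft x) (ft y) ≤ c * dist x y) ∧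
      EqOn ft f.map (f.P i)

/-- The partition element `P i` is wandering. -/
def WanderingIdx (f : PWC d X) (i : Fin f.m) : Prop :=
  ∃ M : ℕ, ∀ n, M < n → Disjoint (f.map^[n] '' f.P i) (f.P i)

/-- `NW(f)`: the union of the non-wandering partition elements. -/
def NW (f : PWC d X) : Set (Euc d) :=
  ⋃ i ∈ {i : Fin f.m | ¬ f.WanderingIdx i}, f.P i

/-- `f` is piecewise strongly contracting: `λ^p · #P(f^p) < 1/2` for some `p`. -/
def Strongly (f : PWC d X) : Prop :=
  ∃ p : ℕ, 0 < p ∧ f.lam ^ p * ((f.partN p).ncard : ℝ) < 1 / 2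

end PWC

/-- Homeomorphisms of `X` onto itself. -/
def HX {d : ℕ} (X : Set (Euc d)) : Set (Euc d → Euc d) :=
  {ψ | MapsTo ψ X X ∧ ContinuousOn ψ X ∧
    ∃ φ : Euc d → Euc d, MapsTo φ X X ∧ ContinuousOn φ X ∧
      (∀ x ∈ X, φ (ψ x) = x) ∧ (∀ x ∈ X, ψ (φ x) = x)}

/-- `H(P(fⁿ),P(gⁿ))`: homeomorphisms of `X` matching the partitions of the
`n`-th iterates. -/
def HsetN {d : ℕ} {X : Set (Euc d)} (f g : PWC d X) (n : ℕ) : Set (Euc d → Euc d) :=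
  {ψ | ψ ∈ HX X ∧ ∀ Q ∈ f.partN n, ψ '' Q ∈ g.partN n}

/-- The distance `ρ(fⁿ,gⁿ)`. -/
noncomputable def rhoN {d : ℕ} {X : Set (Euc d)} (f g : PWC d X) (n : ℕ) : ℝ :=
  if (HsetN f g n).Nonempty then
    ⨅ ψ : HsetN f g n,
      ((⨆ x : X, dist (ψ.1 x.1) x.1) +
        ⨆ x : X, dist (f.map^[n] x.1) (g.map^[n] (ψ.1 x.1)))
  else 2 * diam X

/-- The distance `ρ(f,g)` between piecewise contractions (with their maximal
partitions). -/
noncomputable def rho {d : ℕ} {X : Set (Euc d)} (f g : PWC d X) : ℝ :=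
  rhoN f g 1

/-- The distance `d₁(f,g) = Σₙ σⁿ ρ(fⁿ,gⁿ)`. -/
noncomputable def d1 {d : ℕ} {X : Set (Euc d)} (σ : ℝ) (f g : PWC d X) : ℝ :=
  ∑' n : ℕ, σ ^ (n + 1) * rhoN f g (n + 1)

/-- A finite family of `C²` codimension-one submanifolds of `ℝ^d` (given as
regular level sets), pairwise transversal. -/
structure BoundaryData (d l : ℕ) where
  M : Fin l → Set (Euc d)
  U : Fin l → Set (Euc d)
  g : Fin l → Euc d → ℝ
  openU : ∀ j, IsOpen (U j)
  smooth : ∀ j, ContDiffOn ℝ 2 (g j) (U j)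
  reg : ∀ j, ∀ y ∈ U j, fderiv ℝ (g j) y ≠ 0
  level : ∀ j, M j = {y ∈ U j | g j y = 0}
  transversal : ∀ j k, j ≠ k → ∀ x ∈ M j ∩ M k,
    LinearIndependent ℝ ![fderiv ℝ (g j) x, fderiv ℝ (g k) x]

/-- `f` is a piecewise smooth contraction: each branch has an injective `C³`
extension with finite `C³` norm and `C¹` inverse, and the boundaries of the
partition elements are contained in finitely many pairwise transversal `C²`
`(d-1)`-dimensional manifolds. -/
def PWC.PiecewiseSmooth {d : ℕ} {X : Set (Euc d)} (f : PWC d X) : Prop :=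
  (∀ i, ∃ U : Set (Euc d), IsOpen U ∧ closure (f.P i) ⊆ U ∧
    ∃ ft : Euc d → Euc d, ContDiff ℝ 3 ft ∧
      (∀ n : ℕ, n ≤ 3 → ∃ C : ℝ, ∀ x, ‖iteratedFDeriv ℝ n ft x‖ ≤ C) ∧
      InjOn ft U ∧
      (∀ x ∈ U, ∀ y ∈ U, dist (ft x) (ft y) ≤ f.lam * dist x y) ∧
      EqOn ft f.map (f.P i) ∧
      ∃ gt : Euc d → Euc d, (∀ x ∈ U, gt (ft x) = x) ∧
        ContDiffOn ℝ 1 gt (ft '' U) ∧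
        ∃ C : ℝ, ∀ y ∈ ft '' U, ‖fderivWithin ℝ gt (ft '' U) y‖ ≤ C) ∧
  ∃ (l : ℕ) (B : BoundaryData d l), ∀ i, frontier (f.P i) ⊆ ⋃ j, B.M j

/-- The distance `d₂(f,g)`: the sup over the partition elements of the `C²`
distance between `f` and `g` if the two maximal partitions coincide, and `∞`
otherwise. -/
noncomputable def d2 {d : ℕ} {X : Set (Euc d)} (f g : PWC d X) : ℝ≥0∞ :=
  if Set.range f.P = Set.range g.P then
    ⨆ (i : Fin f.m) (x : f.P i), ENNReal.ofReal
      (∑ n ∈ Finset.range 3,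
        ‖iteratedFDerivWithin ℝ n (fun y => f.map y - g.map y) (f.P i) x.1‖)
  else ⊤

/-- Composition `φ_{σ₁} ∘ ⋯ ∘ φ_{σ_p}` of the maps of an IFS along a finite word. -/
def wordComp {d : ℕ} {I : Type*} (φ : I → Euc d → Euc d) : List I → (Euc d → Euc d)
  | [] => id
  | i :: l => φ i ∘ wordComp φ l

/-- Composition of the maps of an IFS along a word `w : Fin n → I`. -/
def wordCompF {d n : ℕ} {I : Type*} (φ : I → Euc d → Euc d) (w : Fin n → I) :
    Euc d → Euc d :=
  wordComp φ (List.ofFn w)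

/-- The attractor `Λ(Φ)` of an IFS: the union over all symbolic sequences of
`⋂ₙ φ_{σ₁} ∘ ⋯ ∘ φ_{σₙ}(Y)`. -/
def IFSattractor {d : ℕ} {I : Type*} (φ : I → Euc d → Euc d) (Y : Set (Euc d)) :
    Set (Euc d) :=
  {x | ∃ σ : ℕ → I, ∀ n : ℕ, x ∈ wordCompF φ (fun j : Fin n => σ j.1) '' Y}

/-- The set `D_σ(Φ)` of points of `Y` whose partial orbits along the word `σ`
visit the prescribed neighbourhoods `Vm` of the partition elements. -/
def Dset {d : ℕ} {I : Type*} (φ : I → Euc d → Euc d) (Vm : I → Set (Euc d))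
    (Y : Set (Euc d)) (l : List I) : Set (Euc d) :=
  {x | x ∈ Y ∧ ∀ (a : List I) (b : I) (c : List I),
    l = a ++ b :: c → wordComp φ c x ∈ Vm b}

/-- The word `l` is admissible: the image of `D_σ(Φ)` meets some boundary
manifold `ψ_i(D_i)`. -/
def Admissible {d l₀ : ℕ} {I : Type*} (φ : I → Euc d → Euc d) (Vm : I → Set (Euc d))
    (Y : Set (Euc d)) (D : Fin l₀ → Set (Euc (d - 1)))
    (ψb : Fin l₀ → Euc (d - 1) → Euc d) (l : List I) : Prop :=
  ∃ j : Fin l₀, (wordComp φ l '' Dset φ Vm Y l ∩ ψb j '' D j).Nonempty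

/-- `D^N(Φ)`: the union of the local preimages of the boundary manifolds under
admissible compositions of at most `N` maps of the IFS. -/
def DNset {d l₀ : ℕ} {I : Type*} (φ : I → Euc d → Euc d) (Vm : I → Set (Euc d))
    (Y : Set (Euc d)) (D : Fin l₀ → Set (Euc (d - 1)))
    (ψb : Fin l₀ → Euc (d - 1) → Euc d) (N : ℕ) : Set (Euc d) :=
  ⋃ (j : Fin l₀), ⋃ (l : List I), ⋃ (_ : l.length ≤ N),
    {x ∈ Dset φ Vm Y l | wordComp φ l x ∈ ψb j '' D j}

/-- `D^N_δ(Φ)`: the closed `δ`-neighbourhood of `D^N(Φ)`. -/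
def DNnbhd {d l₀ : ℕ} {I : Type*} (φ : I → Euc d → Euc d) (Vm : I → Set (Euc d))
    (Y : Set (Euc d)) (D : Fin l₀ → Set (Euc (d - 1)))
    (ψb : Fin l₀ → Euc (d - 1) → Euc d) (N : ℕ) (δ : ℝ) : Set (Euc d) :=
  {y | ∃ x ∈ DNset φ Vm Y D ψb N, dist y x ≤ δ}

/-- The `C^k` norm of a map `ℝ^d → ℝ^d`. -/
noncomputable def cNorm {d : ℕ} (k : ℕ) (F : Euc d → Euc d) : ℝ :=
  ∑ n ∈ Finset.range (k + 1), ⨆ x : Euc d, ‖iteratedFDeriv ℝ n F x‖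

end
section Aux
variable {d : ℕ} {X : Set (Euc d)}

lemma PWC.iterate_image_subset' (f : PWC d X) (a k : ℕ) :
    f.map^[a + k] '' X ⊆ f.map^[a] '' X := by
  rw [Function.iterate_add, Set.image_comp]
  exact Set.image_mono ((f.mapsTo.iterate k).image_subset)

lemma PWC.delta_closed (f : PWC d X) (hmax : f.IsMaximal) : IsClosed f.Delta := by
  rw [← hmax]
  exact isClosed_iUnion_of_finite fun i => isClosed_frontier

lemma PWC.ball_subset_piece (f : PWC d X) (hmax : f.IsMaximal) {y : Euc d} {r : ℝ}
    (hy : y ∈ interior X) (hr : 0 ≤ r)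
    (hdisj : closedBall y r ∩ f.Delta = ∅) :
    ∃ i, closedBall y r ⊆ f.P i := by
  have hnot : ∀ z ∈ closedBall y r, z ∉ f.Delta := fun z hz hz' =>
    (eq_empty_iff_forall_notMem.1 hdisj z) ⟨hz, hz'⟩
  have hpre : IsPreconnected (closedBall y r) := (convex_closedBall y r).isPreconnected
  have hXsub : closedBall y r ⊆ interior X := by
    apply hpre.subset_left_of_subset_union isOpen_interior isClosed_closure.isOpen_compl
      (disjoint_compl_right.mono_left interior_subset_closure) ?_
      ⟨y, mem_closedBall_self hr, hy⟩
    intro b hb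
    by_cases hbi : b ∈ interior X
    · exact Or.inl hbi
    · by_cases hbc : b ∈ closure X
      · exact absurd (Or.inr ⟨hbc, hbi⟩ : b ∈ f.Delta) (hnot b hb)
      · exact Or.inr hbc
  have hcover : closedBall y r ⊆ ⋃ i, f.P i := by
    intro b hb
    have hbX : b ∈ X := interior_subset (hXsub hb)
    rw [f.cover_eq] at hbX
    obtain ⟨i, hbs⟩ := Set.mem_iUnion.1 hbX
    have hbfr : b ∉ frontier (f.P i) := by
      intro hfr
      exact hnot b hb (hmax ▸ (Set.mem_iUnion.2 ⟨i, hfr⟩))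
    rw [closure_eq_interior_union_frontier, (f.P_open i).interior_eq] at hbs
    exact Set.mem_iUnion.2 ⟨i, hbs.resolve_right hbfr⟩
  obtain ⟨i0, hyi0⟩ := Set.mem_iUnion.1 (hcover (mem_closedBall_self hr))
  refine ⟨i0, ?_⟩
  have hv : IsOpen (⋃ i ∈ {i : Fin f.m | i ≠ i0}, f.P i) :=
    isOpen_biUnion fun i _ => f.P_open i
  apply hpre.subset_left_of_subset_union (f.P_open i0) hv ?_ ?_
    ⟨y, mem_closedBall_self hr, hyi0⟩
  · rw [Set.disjoint_iUnion_right]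
    intro i
    rw [Set.disjoint_iUnion_right]
    exact fun hne => f.P_disjoint i0 i fun he => hne he.symm
  · intro b hb
    obtain ⟨i, hbi⟩ := Set.mem_iUnion.1 (hcover hb)
    by_cases hii : i = i0
    · exact Or.inl (hii ▸ hbi)
    · exact Or.inr (Set.mem_biUnion hii hbi)

lemma PWC.exists_n1 (hX : IsCompact X) (f : PWC d X) (hmax : f.IsMaximal)
    (h : f.att ∩ f.Delta = ∅) :
    ∃ n1, closure (f.map^[n1] '' X) ∩ f.Delta = ∅ := by
  by_contra hc
  push_neg at hc
  have hΔ : IsClosed f.Delta := f.delta_closed hmax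
  have key := IsCompact.nonempty_iInter_of_sequence_nonempty_isCompact_isClosed
    (fun n => closure (f.map^[n] '' X) ∩ f.Delta)
    (fun n => Set.inter_subset_inter_left _
      (closure_mono (f.iterate_image_subset' n 1)))
    hc
    (by
      refine hX.of_isClosed_subset (isClosed_closure.inter hΔ) ?_
      refine (Set.inter_subset_left).trans ?_
      simp [hX.isClosed.closure_eq])
    (fun n => isClosed_closure.inter hΔ)
  rw [← Set.iInter_inter] at key
  exact Set.nonempty_iff_ne_empty.1 key h

end Aux

/-- If the attractor of a piecewise contraction (with its
maximal partition) is disjoint from the discontinuity set, then `f` is Markov. -/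
theorem markov_of_attractor_disjoint_delta {d : ℕ} {X : Set (Euc d)}
    (hX : IsCompact X) (f : PWC d X) (hmax : f.IsMaximal)
    (h : f.att ∩ f.Delta = ∅) : f.Markov := by
  obtain ⟨n1, hn1⟩ := f.exists_n1 hX hmax h
  set K := closure (f.map^[n1] '' X) with hKdef
  have hKcomp : IsCompact K := hX.of_isClosed_subset isClosed_closure
    (closure_minimal ((f.mapsTo.iterate n1).image_subset) hX.isClosed)
  have hΔcl : IsClosed f.Delta := f.delta_closed hmax
  obtain ⟨δ, hδ, hthick⟩ :=
    (Set.disjoint_iff_inter_eq_empty.2 hn1).exists_thickenings hKcomp hΔcl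
  -- balls centered in K of radius < δ avoid Δ
  have hball : ∀ y ∈ K, ∀ r : ℝ, r < δ → closedBall y r ∩ f.Delta = ∅ := by
    intro y hy r hrδ
    apply Set.eq_empty_of_forall_notMem
    rintro z ⟨hz1, hz2⟩
    have hzK : z ∈ thickening δ K :=
      mem_thickening_iff.2 ⟨y, hy, lt_of_le_of_lt (mem_closedBall.1 hz1) hrδ⟩
    exact Set.disjoint_left.1 hthick hzK (self_subset_thickening hδ _ hz2)
  set D := diam X with hDdef
  have hD0 : 0 ≤ D := diam_nonneg
  -- choose N
  obtain ⟨n0, hn0⟩ : ∃ n0 : ℕ, f.lam ^ n0 < δ / (D + 1) :=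
    exists_pow_lt_of_lt_one (div_pos hδ (by linarith)) f.lam_lt_one
  set N := max (max n0 n1) 1 with hNdef
  have hNpos : 0 < N := lt_of_lt_of_le one_pos (le_max_right _ 1)
  have hn1N : n1 ≤ N := le_trans (le_max_right n0 n1) (le_max_left _ 1)
  have hlam01 : (0:ℝ) ≤ f.lam := f.lam_pos.le
  have hlam1 : f.lam ≤ 1 := f.lam_lt_one.le
  have hrδ : ∀ k : ℕ, N ≤ k → f.lam ^ k * D < δ := by
    intro k hk
    have h1 : f.lam ^ k ≤ f.lam ^ n0 :=
      pow_le_pow_of_le_one hlam01 hlam1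
        (le_trans (le_trans (le_max_left n0 n1) (le_max_left _ 1)) hk)
    calc f.lam ^ k * D ≤ f.lam ^ n0 * (D + 1) := by
          apply mul_le_mul h1 (by linarith) hD0 (pow_nonneg hlam01 n0)
      _ < δ / (D + 1) * (D + 1) := by
          apply mul_lt_mul_of_pos_right hn0 (by linarith)
      _ = δ := div_mul_cancel₀ δ (by linarith)
  refine ⟨N, hNpos, ?_⟩
  rintro Q ⟨⟨x₀, hx₀⟩, w, rfl⟩
  set Q := ⋂ j : Fin N, f.map^[(j : ℕ)] ⁻¹' f.P (w j) with hQdef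
  -- membership facts
  have hmemQ : ∀ x ∈ Q, ∀ k : ℕ, ∀ hk : k < N, f.map^[k] x ∈ f.P (w ⟨k, hk⟩) := by
    intro x hx k hk
    exact Set.mem_iInter.1 hx ⟨k, hk⟩
  have hQX : ∀ x ∈ Q, x ∈ X := by
    intro x hx
    have := hmemQ x hx 0 hNpos
    simpa using f.P_subset _ this
  have hx₀X : x₀ ∈ X := hQX x₀ hx₀
  -- atom contraction up to time N
  have hcontr : ∀ x ∈ Q, ∀ k : ℕ, k ≤ N →
      dist (f.map^[k] x) (f.map^[k] x₀) ≤ f.lam ^ k * dist x x₀ := by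
    intro x hx k
    induction k with
    | zero => simp
    | succ k ih =>
      intro hk
      have hkN : k < N := hk
      have hxk := hmemQ x hx k hkN
      have hx₀k := hmemQ x₀ hx₀ k hkN
      rw [Function.iterate_succ_apply', Function.iterate_succ_apply']
      calc dist (f.map (f.map^[k] x)) (f.map (f.map^[k] x₀))
          ≤ f.lam * dist (f.map^[k] x) (f.map^[k] x₀) :=
            f.contracts _ _ hxk _ hx₀k
        _ ≤ f.lam * (f.lam ^ k * dist x x₀) :=
            mul_le_mul_of_nonneg_left (ih (le_of_lt hkN)) hlam01
        _ = f.lam ^ (k + 1) * dist x x₀ := by ring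
  set C := closure (f.map^[N] '' Q) with hCdef
  -- centers are in K and in interior X
  have hcK : ∀ j : ℕ, f.map^[N + j] x₀ ∈ K := by
    intro j
    have h1 : f.map^[N + j] x₀ ∈ f.map^[N + j] '' X := Set.mem_image_of_mem _ hx₀X
    have h2 : f.map^[N + j] '' X ⊆ f.map^[n1] '' X := by
      have := f.iterate_image_subset' n1 (N + j - n1)
      rwa [Nat.add_sub_cancel' (le_trans hn1N (Nat.le_add_right N j))] at this
    exact subset_closure (h2 h1)
  have hcInt : ∀ j : ℕ, f.map^[N + j] x₀ ∈ interior X := by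
    intro j
    have hrw : N + j = (N - 1 + j) + 1 := by omega
    rw [hrw, Function.iterate_succ_apply']
    exact f.image_closure (subset_closure
      (Set.mem_image_of_mem _ ((f.mapsTo.iterate _) hx₀X)))
  have hrj0 : ∀ j : ℕ, 0 ≤ f.lam ^ (N + j) * D :=
    fun j => mul_nonneg (pow_nonneg hlam01 _) hD0
  -- the key induction
  have key : ∀ j : ℕ, f.map^[j] '' C ⊆ closedBall (f.map^[N + j] x₀) (f.lam ^ (N + j) * D) := by
    intro j
    induction j with
    | zero =>
      simp only [Function.iterate_zero, Set.image_id, Nat.add_zero]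
      apply closure_minimal ?_ isClosed_closedBall
      rintro z ⟨x, hx, rfl⟩
      have h1 := hcontr x hx N le_rfl
      have h2 : dist x x₀ ≤ D :=
        dist_le_diam_of_mem hX.isBounded (hQX x hx) hx₀X
      rw [mem_closedBall]
      calc dist (f.map^[N] x) (f.map^[N] x₀) ≤ f.lam ^ N * dist x x₀ := h1
        _ ≤ f.lam ^ N * D := mul_le_mul_of_nonneg_left h2 (pow_nonneg hlam01 N)
    | succ j ih =>
      obtain ⟨i, hPi⟩ := f.ball_subset_piece hmax (hcInt j) (hrj0 j)
        (hball _ (hcK j) _ (hrδ _ (Nat.le_add_right N j)))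
      have hsub : f.map^[j] '' C ⊆ f.P i := ih.trans hPi
      have hcmem : f.map^[N + j] x₀ ∈ f.P i := hPi (mem_closedBall_self (hrj0 j))
      intro z hz
      rw [Function.iterate_succ', Set.image_comp] at hz
      obtain ⟨y, hy, rfl⟩ := hz
      have hy' : y ∈ f.P i := hsub hy
      rw [mem_closedBall]
      have hrw : N + (j + 1) = (N + j) + 1 := by omega
      rw [hrw, Function.iterate_succ_apply']
      calc dist (f.map y) (f.map (f.map^[N + j] x₀))
          ≤ f.lam * dist y (f.map^[N + j] x₀) := f.contracts _ _ hy' _ hcmem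
        _ ≤ f.lam * (f.lam ^ (N + j) * D) :=
            mul_le_mul_of_nonneg_left (mem_closedBall.1 (ih hy)) hlam01
        _ = f.lam ^ ((N + j) + 1) * D := by ring
  have pieceOf : ∀ j : ℕ, ∃ i, f.map^[j] '' C ⊆ f.P i := by
    intro j
    obtain ⟨i, hPi⟩ := f.ball_subset_piece hmax (hcInt j) (hrj0 j)
      (hball _ (hcK j) _ (hrδ _ (Nat.le_add_right N j)))
    exact ⟨i, (key j).trans hPi⟩
  choose v hv using pieceOf
  refine ⟨⋂ j : Fin N, f.map^[(j : ℕ)] ⁻¹' f.P (v j), ⟨?_, ⟨fun j => v j, rfl⟩⟩, ?_⟩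
  · refine ⟨f.map^[N] x₀, ?_⟩
    have hC : f.map^[N] x₀ ∈ C := subset_closure (Set.mem_image_of_mem _ hx₀)
    exact Set.mem_iInter.2 fun j => hv j (Set.mem_image_of_mem _ hC)
  · intro z hz
    exact Set.mem_iInter.2 fun j => hv j (Set.mem_image_of_mem _ hz)
end

section
/- Let f be a Markov piecewise contraction with maximal partition P(f) and stabilisation time N. Then for every P ∈ P(fᴺ) there exists Q ∈ P(fᴺ) such that f(P) ⊂ Q. -/
open Set Metric Topology Function
open scoped ENNReal

noncomputable section

attribute [local instance] Classical.propDecidable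

end
/-- If `f` is a Markov piecewise contraction with stabilisation
time `N`, then `f` maps each element of `P(f^N)` into an element of `P(f^N)`. -/
theorem refined_partition_mapsTo {d : ℕ} {X : Set (Euc d)} (hX : IsCompact X)
    (f : PWC d X) (hmax : f.IsMaximal) (N : ℕ) (hN : f.IsStabTime N) :
    ∀ Q ∈ f.partN N, ∃ Q' ∈ f.partN N, f.map '' Q ⊆ Q' := by
  obtain ⟨Npos, hstab, -⟩ := hN
  rintro Q ⟨hne, w, rfl⟩
  obtain ⟨Q', hQ', hsub⟩ := hstab _ ⟨hne, w, rfl⟩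
  obtain ⟨-, w', rfl⟩ := hQ'
  set u : Fin N → Fin f.m :=
    fun j => if h : (j : ℕ) + 1 < N then w ⟨(j : ℕ) + 1, h⟩ else w' ⟨0, Npos⟩ with hu
  have key : f.map '' (⋂ j : Fin N, f.map^[(j : ℕ)] ⁻¹' f.P (w j)) ⊆
      ⋂ j : Fin N, f.map^[(j : ℕ)] ⁻¹' f.P (u j) := by
    rintro y ⟨x, hx, rfl⟩
    have hx' := Set.mem_iInter.mp hx
    simp only [Set.mem_preimage] at hx'
    refine Set.mem_iInter.mpr fun j => ?_
    simp only [Set.mem_preimage, ← Function.iterate_succ_apply, hu]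
    by_cases h : (j : ℕ) + 1 < N
    · rw [dif_pos h]
      exact hx' ⟨(j : ℕ) + 1, h⟩
    · rw [dif_neg h]
      have hjN : (j : ℕ) + 1 = N := le_antisymm j.isLt (not_lt.mp h)
      rw [Nat.succ_eq_add_one, hjN]
      have hmem : f.map^[N] x ∈ ⋂ j : Fin N, f.map^[(j : ℕ)] ⁻¹' f.P (w' j) :=
        hsub (subset_closure ⟨x, hx, rfl⟩)
      have := Set.mem_iInter.mp hmem ⟨0, Npos⟩
      simpa using this
  exact ⟨_, ⟨(hne.image f.map).mono key, u, rfl⟩, key⟩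
end
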